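/- Let G₀ = (V, A₀) be a finite loopless directed graph, r ∈ V, U ⊆ V. Suppose that every vertex v ∈ U that is not reachable from r in G₀ either belongs to some Edmonds connected subgraph of G₀ or is connected to some Edmonds connected subgraph of G₀, and suppose that at least one vertex of U is not reachable from r in G₀. Then there exists an Edmonds connected subgraph B of G₀ that is uncovered, i.e. δ⁻(B) = ∅. -/

import Mathlib

/-- `δ⁻(S)`: the arcs of `A` entering `S` from outside. -/
def deltaMinus {V : Type*} [DecidableEq V] (A : Finset (V × V)) (S : Finset V) :
    Finset (V × V) :=
  A.filter fun e => e.1 ∉ S ∧ e.2 ∈ S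

/-- `Reaches F u v`: there is a directed path from `u` to `v` using only arcs of `F`. -/
def Reaches {V : Type*} (F : Finset (V × V)) (u v : V) : Prop :=
  Relation.ReflTransGen (fun a b => (a, b) ∈ F) u v

/-- `B` is weakly connected: connected when arc directions are ignored, using only
arcs with both endpoints in `B`. -/
def WeaklyConnectedIn {V : Type*} (A₀ : Finset (V × V)) (B : Finset V) : Prop :=
  ∀ a ∈ B, ∀ b ∈ B,
    Relation.ReflTransGen
      (fun x y => (x ∈ B ∧ y ∈ B) ∧ ((x, y) ∈ A₀ ∨ (y, x) ∈ A₀)) a b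

/-- An Edmonds connected subgraph of `(V, A₀)` with respect to the root `r` and `U ⊆ V`:
a set `B ⊆ V \ {r}` with at least two vertices, weakly connected in `(V, A₀)`, such that
every node of `B ∩ U` is reachable by a directed path from every node of `B`. -/
def IsEdmonds {V : Type*} (A₀ : Finset (V × V)) (r : V) (U : Set V) (B : Finset V) : Prop :=
  r ∉ B ∧ 2 ≤ B.card ∧ WeaklyConnectedIn A₀ B ∧
    ∀ i ∈ B, ∀ v ∈ B, v ∈ U → Reaches A₀ i v

/-- if every vertex of `U` not reachable from `r` in `G₀` belongs to, or is
connected to, some Edmonds connected subgraph of `G₀`, and some vertex of `U` is not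
reachable from `r`, then there is an uncovered Edmonds connected subgraph `B`
(`δ⁻(B) = ∅`). -/
theorem stmt5 {V : Type*} [Fintype V] [DecidableEq V]
    (A₀ : Finset (V × V)) (hloop : ∀ e ∈ A₀, e.1 ≠ e.2) (r : V) (U : Set V)
    (hcond : ∀ v ∈ U, ¬ Reaches A₀ r v →
      (∃ B : Finset V, IsEdmonds A₀ r U B ∧ v ∈ B) ∨
      (∃ B : Finset V, IsEdmonds A₀ r U B ∧ ∃ b ∈ B, Reaches A₀ b v))
    (hex : ∃ v ∈ U, ¬ Reaches A₀ r v) :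
    ∃ B : Finset V, IsEdmonds A₀ r U B ∧ deltaMinus A₀ B = ∅ := by
  classical
  obtain ⟨v, hvU, hvr⟩ := hex
  -- `cl t` : the set of vertices reaching `t`
  set cl : V → Finset V := fun t => Finset.univ.filter (fun x => Reaches A₀ x t) with hcl
  have hmemcl : ∀ t x : V, x ∈ cl t ↔ Reaches A₀ x t := by
    intro t x; simp [hcl]
  -- the set of candidate witnesses
  set S : Finset V := Finset.univ.filter (fun x => x ∈ U ∧ ¬ Reaches A₀ r x) with hS
  have hvS : v ∈ S := by simp [hS, hvU, hvr]
  obtain ⟨v₀, hv₀S, hmin⟩ := S.exists_min_image (fun x => (cl x).card) ⟨v, hvS⟩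
  have hv₀U : v₀ ∈ U := by
    have := Finset.mem_filter.mp hv₀S; exact this.2.1
  have hv₀r : ¬ Reaches A₀ r v₀ := by
    have := Finset.mem_filter.mp hv₀S; exact this.2.2
  set W : Finset V := cl v₀ with hW
  have hmemW : ∀ x : V, x ∈ W ↔ Reaches A₀ x v₀ := fun x => hmemcl v₀ x
  have hv₀W : v₀ ∈ W := (hmemW v₀).mpr Relation.ReflTransGen.refl
  -- W is closed under predecessors
  have hclosed : ∀ p q : V, Reaches A₀ p q → q ∈ W → p ∈ W := by
    intro p q hpq hq
    exact (hmemW p).mpr (hpq.trans ((hmemW q).mp hq))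
  -- every vertex of W is unreachable from r
  have hWnr : ∀ x ∈ W, ¬ Reaches A₀ r x := by
    intro x hx hrx
    exact hv₀r (hrx.trans ((hmemW x).mp hx))
  -- key minimality consequence: v₀ reaches every vertex of W ∩ U
  have hkey : ∀ t ∈ W, t ∈ U → Reaches A₀ v₀ t := by
    intro t htW htU
    have htS : t ∈ S := by simp [hS, htU, hWnr t htW]
    have hsub : cl t ⊆ cl v₀ := by
      intro x hx
      exact (hmemcl v₀ x).mpr (((hmemcl t x).mp hx).trans ((hmemW t).mp htW))
    have hcard : (cl v₀).card ≤ (cl t).card := hmin t htS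
    have heq : cl t = cl v₀ := Finset.eq_of_subset_of_card_le hsub hcard
    have : v₀ ∈ cl t := heq ▸ hv₀W
    exact (hmemcl t v₀).mp this
  -- every vertex of W is weakly connected (inside W) to v₀
  have hweak : ∀ a : V, Reaches A₀ a v₀ →
      Relation.ReflTransGen
        (fun x y => (x ∈ W ∧ y ∈ W) ∧ ((x, y) ∈ A₀ ∨ (y, x) ∈ A₀)) a v₀ := by
    intro a ha
    induction ha using Relation.ReflTransGen.head_induction_on with
    | refl => exact Relation.ReflTransGen.refl
    | head hstep htail ih =>
      rename_i x y
      have hyW : y ∈ W := (hmemW y).mpr htail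
      have hxW : x ∈ W := (hmemW x).mpr (Relation.ReflTransGen.head hstep htail)
      exact Relation.ReflTransGen.head ⟨⟨hxW, hyW⟩, Or.inl hstep⟩ ih
  have hsymm : Symmetric (fun x y => (x ∈ W ∧ y ∈ W) ∧ ((x, y) ∈ A₀ ∨ (y, x) ∈ A₀)) := by
    intro x y hxy
    exact ⟨⟨hxy.1.2, hxy.1.1⟩, hxy.2.symm⟩
  -- W has at least two elements
  have h2 : 1 < W.card := by
    have hv₀case : ∀ B : Finset V, IsEdmonds A₀ r U B → v₀ ∈ B → 1 < W.card := by
      intro B hB hv₀B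
      obtain ⟨i, hiB, hine⟩ := Finset.exists_mem_ne (by have := hB.2.1; omega : 1 < B.card) v₀
      have hiW : i ∈ W := (hmemW i).mpr (hB.2.2.2 i hiB v₀ hv₀B hv₀U)
      exact Finset.one_lt_card.mpr ⟨i, hiW, v₀, hv₀W, hine⟩
    rcases hcond v₀ hv₀U hv₀r with ⟨B, hB, hv₀B⟩ | ⟨B, hB, b, hbB, hbv₀⟩
    · exact hv₀case B hB hv₀B
    · by_cases hbe : b = v₀
      · exact hv₀case B hB (hbe ▸ hbB)
      · have hbW : b ∈ W := (hmemW b).mpr hbv₀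
        exact Finset.one_lt_card.mpr ⟨b, hbW, v₀, hv₀W, hbe⟩
  refine ⟨W, ⟨?_, by omega, ?_, ?_⟩, ?_⟩
  · -- r ∉ W
    intro hrW
    exact hWnr r hrW Relation.ReflTransGen.refl
  · -- weakly connected
    intro a haW b hbW
    have ha := hweak a ((hmemW a).mp haW)
    have hb := hweak b ((hmemW b).mp hbW)
    exact ha.trans ((@Relation.ReflTransGen.symmetric _ _ ⟨hsymm⟩).symm _ _ hb)
  · -- reachability condition
    intro i hiW t htW htU
    exact ((hmemW i).mp hiW).trans (hkey t htW htU)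
  · -- uncovered
    apply Finset.filter_eq_empty_iff.mpr
    intro e heA he
    exact he.1 (hclosed e.1 e.2 (Relation.ReflTransGen.single heA) he.2)
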